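/- Let G be a finite group and 1 → R → F → G → 1 a presentation with F a free group of finite rank and R a normal subgroup of F. Then R/[R,F] is torsion-free if and only if H₂(G, ℤ) = 0, i.e., if and only if the Schur multiplier of G is trivial. -/

import Mathlib

/-!
STATEMENT 4: For a finite group `G` with a finite-type presentation
`1 → R → F → G → 1`, the group `R/[R,F]` is torsion-free iff `H₂(G,ℤ) = 0`
(iff the Schur multiplier of `G` is trivial).  `H₂(G,ℤ)` is defined via
Hopf's formula for the canonical presentation of `G`.
-/

/-- The subgroup `[ker π, F]` of the free group `F`. -/
def relComm {X G : Type} [Group G] (π : FreeGroup X →* G) : Subgroup (FreeGroup X) :=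
  ⁅π.ker, (⊤ : Subgroup (FreeGroup X))⁆

instance {X G : Type} [Group G] (π : FreeGroup X →* G) : (relComm π).Normal :=
  Subgroup.commutator_normal _ _

/-- `R/[R,F]`, realized as the image of `R = ker π` in `F/[R,F]`. -/
def relCoinv {X G : Type} [Group G] (π : FreeGroup X →* G) :
    Subgroup (FreeGroup X ⧸ relComm π) :=
  Subgroup.map (QuotientGroup.mk' (relComm π)) π.ker

/-- The kernel of the canonical presentation `FreeGroup G → G`. -/
def hopfKer (G : Type) [Group G] : Subgroup (FreeGroup G) :=
  (FreeGroup.lift (id : G → G)).ker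

/-- `H₂(G, ℤ)` via Hopf's formula, for the canonical presentation `FreeGroup G → G`. -/
def H2Z (G : Type) [Group G] :
    Subgroup (FreeGroup G ⧸ relComm (FreeGroup.lift (id : G → G))) :=
  Subgroup.map (QuotientGroup.mk' (relComm (FreeGroup.lift (id : G → G))))
    (hopfKer G ⊓ commutator (FreeGroup G))

/- ### Auxiliary material -/

/-- Hopf's `H₂` for a general presentation `π : FreeGroup X →* G`. -/
def H2gen {X G : Type} [Group G] (π : FreeGroup X →* G) :
    Subgroup (FreeGroup X ⧸ relComm π) :=
  Subgroup.map (QuotientGroup.mk' (relComm π)) (π.ker ⊓ commutator (FreeGroup X))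

section Aux

variable {X G : Type} [Group G] (π : FreeGroup X →* G)

theorem relComm_le_ker : relComm π ≤ π.ker := by
  rw [relComm, Subgroup.commutator_le]
  intro r hr f _
  rw [MonoidHom.mem_ker] at hr ⊢
  rw [map_commutatorElement, hr]
  group

theorem relComm_le_commutator : relComm π ≤ commutator (FreeGroup X) :=
  Subgroup.commutator_mono le_top le_top

/-- The induced map `F/[R,F] →* G`. -/
def πbar : (FreeGroup X ⧸ relComm π) →* G :=
  QuotientGroup.lift _ π fun x hx => (relComm_le_ker π) hx

theorem ker_πbar : (πbar π).ker = relCoinv π := by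
  ext q
  constructor
  · intro hq
    induction q using QuotientGroup.induction_on with
    | H f =>
      exact ⟨f, hq, rfl⟩
  · rintro ⟨r, hr, rfl⟩
    simpa [πbar, MonoidHom.mem_ker] using hr

theorem relCoinv_le_center : relCoinv π ≤ Subgroup.center (FreeGroup X ⧸ relComm π) := by
  rintro _ ⟨r, hr, rfl⟩
  rw [Subgroup.mem_center_iff]
  intro q
  induction q using QuotientGroup.induction_on with
  | H f =>
    show ((f * r : FreeGroup X) : FreeGroup X ⧸ relComm π) = ((r * f : FreeGroup X) : _)
    rw [QuotientGroup.eq]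
    open commutatorElement in have : (f * r)⁻¹ * (r * f) = ⁅r⁻¹, f⁻¹⁆ := by group
    rw [this]
    exact Subgroup.commutator_mem_commutator (π.ker.inv_mem hr) (Subgroup.mem_top _)

/-- Two lifts along `π` of the same homomorphism agree, modulo `[R,F]`,
on the commutator subgroup. -/
theorem lift_eq_on_commutator {Y : Type} (α β : FreeGroup Y →* FreeGroup X)
    (h : π.comp α = π.comp β) {w : FreeGroup Y} (hw : w ∈ commutator (FreeGroup Y)) :
    ((α w : FreeGroup X) : FreeGroup X ⧸ relComm π) = ((β w : FreeGroup X) : _) := by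
  set m : FreeGroup X →* FreeGroup X ⧸ relComm π := QuotientGroup.mk' (relComm π) with hm
  have hcent : ∀ v : FreeGroup Y,
      (m (β v))⁻¹ * m (α v) ∈ Subgroup.center (FreeGroup X ⧸ relComm π) := by
    intro v
    apply relCoinv_le_center π
    rw [← ker_πbar π]
    have h1 : πbar π (m (α v)) = π (α v) := rfl
    have h2 : πbar π (m (β v)) = π (β v) := rfl
    have h3 : π (α v) = π (β v) := by
      have := congrArg (fun f => f v) (congrArg (fun f => f.toFun) h)
      simpa using this
    rw [MonoidHom.mem_ker, map_mul, map_inv, h1, h2, h3]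
    group
  -- the "difference" homomorphism
  set δ : FreeGroup Y →* FreeGroup X ⧸ relComm π :=
    MonoidHom.mk' (fun v => (m (β v))⁻¹ * m (α v)) (by
      intro a b
      have hc := Subgroup.mem_center_iff.mp (hcent a) ((m (β b))⁻¹)
      show (m (β (a * b)))⁻¹ * m (α (a * b)) =
        ((m (β a))⁻¹ * m (α a)) * ((m (β b))⁻¹ * m (α b))
      simp only [map_mul, mul_inv_rev]
      calc (m (β b))⁻¹ * (m (β a))⁻¹ * (m (α a) * m (α b))
          = ((m (β b))⁻¹ * ((m (β a))⁻¹ * m (α a))) * m (α b) := by group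
        _ = (((m (β a))⁻¹ * m (α a)) * (m (β b))⁻¹) * m (α b) := by rw [hc]
        _ = ((m (β a))⁻¹ * m (α a)) * ((m (β b))⁻¹ * m (α b)) := by group) with hδ
  have hδker : commutator (FreeGroup Y) ≤ δ.ker := by
    rw [commutator_def, Subgroup.commutator_le]
    intro g₁ _ g₂ _
    rw [MonoidHom.mem_ker, map_commutatorElement]
    have : Commute (δ g₁) (δ g₂) :=
      (Subgroup.mem_center_iff.mp (hcent g₁) (δ g₂)).symm
    exact commutatorElement_eq_one_iff_commute.mpr this
  have h1 : δ w = 1 := hδker hw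
  have h2 : (m (β w))⁻¹ * m (α w) = 1 := h1
  show m (α w) = m (β w)
  exact (inv_mul_eq_one.mp h2).symm

/-- Torsion-freeness of the abelianization of a free group. -/
theorem abelianization_freeGroup_torsionFree {a : Abelianization (FreeGroup X)} {n : ℕ}
    (hn : n ≠ 0) (h : a ^ n = 1) : a = 1 := by
  set v : FreeAbelianGroup X := Additive.ofMul a with hv
  have hnv : n • v = 0 := by
    rw [hv]; show Additive.ofMul (a ^ n) = Additive.ofMul 1; rw [h]
  have h0 : FreeAbelianGroup.toFinsupp v = 0 := by
    have h1 : n • FreeAbelianGroup.toFinsupp v = 0 := by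
      rw [← map_nsmul, hnv, map_zero]
    ext x
    have := congrArg (fun f => f x) h1
    simp only [Finsupp.smul_apply, Finsupp.coe_zero, Pi.zero_apply, smul_eq_mul] at this
    have := this
    rw [nsmul_eq_mul] at this
    rcases mul_eq_zero.mp this with h | h
    · exact absurd (by exact_mod_cast h) hn
    · simpa using h
  have : v = 0 := by
    rw [← Finsupp.toFreeAbelianGroup_toFinsupp v, h0, map_zero]
  exact ofMul_eq_zero.mp (hv ▸ this)

end Aux

/-- Hopf's formula independence (triviality transfer between presentations). -/
theorem H2gen_bot_transfer {X Y G : Type} [Group G] (π : FreeGroup X →* G)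
    (τ : FreeGroup Y →* G) (hπ : Function.Surjective π) (hτ : Function.Surjective τ)
    (h : H2gen π = ⊥) : H2gen τ = ⊥ := by
  -- choose lifts
  have hφy : ∀ y : Y, ∃ u : FreeGroup X, π u = τ (FreeGroup.of y) := fun y => hπ _
  have hψx : ∀ x : X, ∃ u : FreeGroup Y, τ u = π (FreeGroup.of x) := fun x => hτ _
  set φ : FreeGroup Y →* FreeGroup X := FreeGroup.lift (fun y => (hφy y).choose) with hφ
  set ψ : FreeGroup X →* FreeGroup Y := FreeGroup.lift (fun x => (hψx x).choose) with hψ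
  have hπφ : π.comp φ = τ := by
    apply FreeGroup.ext_hom
    intro y
    simpa [hφ] using (hφy y).choose_spec
  have hτψ : τ.comp ψ = π := by
    apply FreeGroup.ext_hom
    intro x
    simpa [hψ] using (hψx x).choose_spec
  rw [eq_bot_iff]
  rintro _ ⟨w, ⟨hw1, hw2⟩, rfl⟩
  rw [Subgroup.mem_bot]
  show ((w : FreeGroup Y) : FreeGroup Y ⧸ relComm τ) = 1
  -- φ w lands in ker π ⊓ commutator
  have hker : φ w ∈ π.ker := by
    rw [MonoidHom.mem_ker, ← MonoidHom.comp_apply, hπφ]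
    exact hw1
  have hcommφ : φ w ∈ commutator (FreeGroup X) := by
    have h1 : φ w ∈ (commutator (FreeGroup Y)).map φ := Subgroup.mem_map_of_mem φ hw2
    have h2 : (commutator (FreeGroup Y)).map φ ≤ commutator (FreeGroup X) := by
      rw [commutator_def, Subgroup.map_commutator]
      exact Subgroup.commutator_mono le_top le_top
    exact h2 h1
  -- hence its class lies in H2gen π = ⊥
  have hbot : ((φ w : FreeGroup X) : FreeGroup X ⧸ relComm π) = 1 := by
    have : ((φ w : FreeGroup X) : FreeGroup X ⧸ relComm π) ∈ H2gen π :=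
      ⟨φ w, ⟨hker, hcommφ⟩, rfl⟩
    rw [h, Subgroup.mem_bot] at this
    exact this
  have hrel : φ w ∈ relComm π := (QuotientGroup.eq_one_iff _).mp hbot
  -- ψ maps relComm π into relComm τ
  have hmaprel : (relComm π).map ψ ≤ relComm τ := by
    rw [relComm, relComm, Subgroup.map_commutator]
    apply Subgroup.commutator_mono
    · rintro _ ⟨r, hr, rfl⟩
      rw [MonoidHom.mem_ker, ← MonoidHom.comp_apply, hτψ]
      exact hr
    · exact le_top
  have hψφw : ψ (φ w) ∈ relComm τ := hmaprel (Subgroup.mem_map_of_mem ψ hrel)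
  have h1 : ((ψ (φ w) : FreeGroup Y) : FreeGroup Y ⧸ relComm τ) = 1 :=
    (QuotientGroup.eq_one_iff _).mpr hψφw
  -- ψ ∘ φ and id both lift τ, so they agree on the commutator subgroup mod [S,F]
  have h2 : τ.comp (ψ.comp φ) = τ.comp (MonoidHom.id _) := by
    rw [← MonoidHom.comp_assoc, hτψ, hπφ]
    rfl
  have h3 := lift_eq_on_commutator τ (ψ.comp φ) (MonoidHom.id _) h2 hw2
  simp only [MonoidHom.comp_apply, MonoidHom.id_apply] at h3
  rw [← h3]
  exact h1

/-- Hopf's formula: `R/[R,F]` is torsion-free iff `H2gen π` vanishes. -/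
theorem torsionFree_iff_H2gen {X G : Type} [Group G] [Finite G] (π : FreeGroup X →* G) :
    (∀ g : ↥(relCoinv π), g ≠ 1 → ¬IsOfFinOrder g) ↔ H2gen π = ⊥ := by
  set m : FreeGroup X →* FreeGroup X ⧸ relComm π := QuotientGroup.mk' (relComm π) with hm
  constructor
  · intro htf
    -- finite index of the center
    haveI hfr : Finite (πbar π).range := Subtype.finite
    haveI hfi : (πbar π).ker.FiniteIndex := Subgroup.finiteIndex_ker _
    haveI hfi2 : (relCoinv π).FiniteIndex := ker_πbar π ▸ hfi
    haveI hfc : (Subgroup.center (FreeGroup X ⧸ relComm π)).FiniteIndex :=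
      Subgroup.finiteIndex_of_le (relCoinv_le_center π)
    rw [eq_bot_iff]
    rintro _ ⟨w, ⟨hw1, hw2⟩, rfl⟩
    rw [Subgroup.mem_bot]
    -- the class of w is a torsion element of relCoinv π
    set n := (Subgroup.center (FreeGroup X ⧸ relComm π)).index with hn
    have hn0 : n ≠ 0 := hfc.index_ne_zero
    have hcw : m w ∈ commutator (FreeGroup X ⧸ relComm π) := by
      have h1 : m w ∈ (commutator (FreeGroup X)).map m := Subgroup.mem_map_of_mem m hw2
      have h2 : (commutator (FreeGroup X)).map m ≤ commutator _ := by
        rw [commutator_def, Subgroup.map_commutator]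
        exact Subgroup.commutator_mono le_top le_top
      exact h2 h1
    have hpow : (m w) ^ n = 1 := by
      have h1 : MonoidHom.transferCenterPow (FreeGroup X ⧸ relComm π) (m w) = 1 := by
        letI : CommGroup ↥(Subgroup.center (FreeGroup X ⧸ relComm π)) :=
          { (Subgroup.center (FreeGroup X ⧸ relComm π)).toGroup with
            mul_comm := fun a b => Subtype.ext (Subgroup.mem_center_iff.mp b.2 a) }
        exact Abelianization.commutator_subset_ker
          (MonoidHom.transferCenterPow (FreeGroup X ⧸ relComm π)) hcw
      have h2 := MonoidHom.transferCenterPow_apply (G := FreeGroup X ⧸ relComm π) (m w)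
      rw [h1] at h2
      exact h2.symm
    set g : ↥(relCoinv π) := ⟨m w, ⟨w, hw1, rfl⟩⟩ with hg
    have hgfin : IsOfFinOrder g := by
      rw [isOfFinOrder_iff_pow_eq_one]
      exact ⟨n, Nat.pos_of_ne_zero hn0, by
        ext
        simpa using hpow⟩
    by_contra hne
    refine htf g (fun hh => hne ?_) hgfin
    have hv := congrArg Subtype.val hh
    rw [hg] at hv
    simpa only [OneMemClass.coe_one] using hv
  · intro h
    intro g hg hfin
    exfalso
    apply hg
    obtain ⟨n, hn, hgn⟩ := isOfFinOrder_iff_pow_eq_one.mp hfin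
    obtain ⟨w, hw, hmk⟩ := g.2
    -- (m w)^n = 1, so w^n ∈ relComm π
    have hv := congrArg Subtype.val hgn
    simp only [SubgroupClass.coe_pow, OneMemClass.coe_one] at hv
    rw [← hmk, ← map_pow] at hv
    have h2 : w ^ n ∈ relComm π := by
      rw [← QuotientGroup.ker_mk' (relComm π)]
      exact hv
    -- hence w is in the commutator subgroup, by torsion-freeness of the abelianization
    have h3 : (Abelianization.of w) ^ n = 1 := by
      rw [← map_pow]
      exact Abelianization.commutator_subset_ker Abelianization.of
        (relComm_le_commutator π h2)
    have h4 : Abelianization.of w = 1 :=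
      abelianization_freeGroup_torsionFree hn.ne' h3
    have h5 : w ∈ commutator (FreeGroup X) := (QuotientGroup.eq_one_iff w).mp h4
    have h6 : m w ∈ H2gen π := ⟨w, ⟨hw, h5⟩, rfl⟩
    rw [h, Subgroup.mem_bot] at h6
    refine Subtype.ext ?_
    rw [OneMemClass.coe_one, ← hmk]
    exact h6

theorem finiteGroup_quasirational_iff_H2_trivial
    {X G : Type} [Finite X] [Group G] [Finite G] (π : FreeGroup X →* G)
    (hπ : Function.Surjective π) :
    (∀ g : ↥(relCoinv π), g ≠ 1 → ¬IsOfFinOrder g) ↔ H2Z G = ⊥ := by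
  have hZ : H2Z G = H2gen (FreeGroup.lift (id : G → G)) := rfl
  have hπ₀ : Function.Surjective (FreeGroup.lift (id : G → G)) := fun g =>
    ⟨FreeGroup.of g, by simp⟩
  rw [hZ, torsionFree_iff_H2gen π]
  exact ⟨H2gen_bot_transfer π _ hπ hπ₀, H2gen_bot_transfer _ π hπ₀ hπ⟩
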